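/- Let G and H be finite simple graphs such that G is connected, and let φ : V(H) → V(G) be an injective map such that the superposition F = G ⊕_φ H is edge 2-connected. Let X be a vertex cover of H with |X| = t ≥ 1. Then there exists a set Y ⊆ V(H) \ X with |Y| ≤ 2(t−1) such that, setting H' = H[X ∪ Y] (the subgraph of H induced by X ∪ Y) and ψ = φ restricted to X ∪ Y, all vertices of ψ(X ∪ Y) lie in the same biconnected component of the superposition F' = G ⊕_ψ H'. -/

import Mathlib

open SimpleGraph

/-- The superposition `G ⊕_φ H` of `G` and `H` with respect to an injective map
`φ : V(H) ↪ V(G)`. -/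
def superpose {α β : Type*} (G : SimpleGraph α) (H : SimpleGraph β) (φ : β ↪ α) :
    SimpleGraph α :=
  G ⊔ SimpleGraph.map φ H

/-- The subgraph of `H` consisting of the edges of the induced subgraph `H[s]`
(on the same vertex type). -/
def restrict {β : Type*} (H : SimpleGraph β) (s : Set β) : SimpleGraph β where
  Adj x y := x ∈ s ∧ y ∈ s ∧ H.Adj x y
  symm := ⟨fun x y h => ⟨h.2.1, h.1, h.2.2.symm⟩⟩
  loopless := ⟨fun x h => H.loopless.irrefl x h.2.2⟩

/-- A graph is edge 2-connected if it is connected and has no bridge. -/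
def TwoEdgeConnected {α : Type*} (G : SimpleGraph α) : Prop :=
  G.Connected ∧ ∀ e : Sym2 α, ¬ G.IsBridge e

/-- The graph obtained from `G` by deleting all its bridges; its connected
components are the biconnected components of `G`. -/
def bicompGraph {α : Type*} (G : SimpleGraph α) : SimpleGraph α :=
  G.deleteEdges {e | G.IsBridge e}

namespace StmtAux

variable {α : Type*}

lemma isBridge_iff' {K : SimpleGraph α} {c d : α} (hpre : K.Preconnected) :
    K.IsBridge s(c,d) ↔ K.Adj c d ∧ ¬ (K.deleteEdges {s(c,d)}).Reachable c d :=
  ⟨fun h => ⟨h.reachable_iff_adj.mp (hpre c d), isBridge_iff.mp h⟩, fun h => isBridge_iff.mpr h.2⟩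

lemma isBridge_of_le {K K' : SimpleGraph α} (hle : K ≤ K') {c d : α}
    (hadj : K.Adj c d) (hb : K'.IsBridge s(c,d)) : K.IsBridge s(c,d) := by
  rw [isBridge_iff] at hb ⊢
  refine fun hr => hb (hr.mono ?_)
  intro u v huv
  simp only [deleteEdges_adj] at huv ⊢
  exact ⟨hle huv.1, huv.2⟩

lemma bicomp_mono {K K' : SimpleGraph α} (hle : K ≤ K') :
    bicompGraph K ≤ bicompGraph K' := by
  intro u v huv
  simp only [bicompGraph, deleteEdges_adj, Set.mem_setOf_eq] at huv ⊢
  exact ⟨hle huv.1, fun hb => huv.2 (isBridge_of_le hle huv.1 hb)⟩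

lemma bicomp_le_del {K : SimpleGraph α} {e : Sym2 α} (hb : K.IsBridge e) :
    bicompGraph K ≤ K.deleteEdges {e} := by
  intro u v huv
  simp only [bicompGraph, deleteEdges_adj, Set.mem_setOf_eq] at huv ⊢
  refine ⟨huv.1, fun hmem => ?_⟩
  rw [Set.mem_singleton_iff] at hmem
  exact huv.2 (hmem ▸ hb)

/-- walks within the `a`-side of a deleted edge `e₁` avoid any edge `s(c,d)`
with `d` outside the side. -/
lemma reach_del_of_side {K : SimpleGraph α} {e₁ : Sym2 α} {a c d x y : α}
    (hnd : ¬ (K.deleteEdges {e₁}).Reachable a d)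
    (hx : (K.deleteEdges {e₁}).Reachable a x)
    (hy : (K.deleteEdges {e₁}).Reachable a y) :
    (K.deleteEdges {s(c,d)}).Reachable x y := by
  have core : ∀ (u w : α) (W : (K.deleteEdges {e₁}).Walk u w),
      (K.deleteEdges {e₁}).Reachable a u → (K.deleteEdges {s(c,d)}).Reachable u w := by
    intro u w W
    induction W with
    | nil => intro _; exact Reachable.refl _
    | @cons u' v' w' h W ih =>
      intro hau
      have hK : K.Adj u' v' := (deleteEdges_adj.mp h).1
      have hav : (K.deleteEdges {e₁}).Reachable a v' := hau.trans ⟨Walk.cons h Walk.nil⟩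
      have hne : s(u', v') ≠ s(c, d) := by
        intro hEq
        rw [Sym2.eq_iff] at hEq
        rcases hEq with ⟨h1, h2⟩ | ⟨h1, h2⟩
        · exact hnd (h2 ▸ hav)
        · exact hnd (h1 ▸ hau)
      have hadj : (K.deleteEdges {s(c,d)}).Adj u' v' := by
        rw [deleteEdges_adj]
        exact ⟨hK, by simpa using hne⟩
      exact (Adj.reachable hadj).trans (ih hav)
  obtain ⟨Wx⟩ := hx
  obtain ⟨Wy⟩ := hy
  exact ((core a x Wx (Reachable.refl a)).symm).trans (core a y Wy (Reachable.refl a))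

lemma reach_del_or {K : SimpleGraph α} (hpre : K.Preconnected) (c d x : α) :
    (K.deleteEdges {s(c,d)}).Reachable c x ∨ (K.deleteEdges {s(c,d)}).Reachable d x := by
  obtain ⟨W⟩ := hpre c x
  have core : ∀ (u w : α) (W : K.Walk u w),
      ((K.deleteEdges {s(c,d)}).Reachable c u ∨ (K.deleteEdges {s(c,d)}).Reachable d u) →
      ((K.deleteEdges {s(c,d)}).Reachable c w ∨ (K.deleteEdges {s(c,d)}).Reachable d w) := by
    intro u w W
    induction W with
    | nil => exact fun h => h
    | @cons u' v' w' h W ih =>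
      intro hu
      refine ih ?_
      by_cases hne : s(u', v') = s(c, d)
      · rw [Sym2.eq_iff] at hne
        rcases hne with ⟨h1, h2⟩ | ⟨h1, h2⟩
        · right; rw [h2]
        · left; rw [h2]
      · have hadj : (K.deleteEdges {s(c,d)}).Adj u' v' := by
          rw [deleteEdges_adj]; exact ⟨h, by simpa using hne⟩
        rcases hu with hu | hu
        · left; exact hu.trans hadj.reachable
        · right; exact hu.trans hadj.reachable
  exact core c x W (Or.inl (Reachable.refl c))

lemma not_reach_other {K : SimpleGraph α} {c d x : α} (hb : K.IsBridge s(c,d))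
    (h1 : (K.deleteEdges {s(c,d)}).Reachable c x) :
    ¬ (K.deleteEdges {s(c,d)}).Reachable d x := by
  intro h2
  exact (isBridge_iff.mp hb) (h1.trans h2.symm)

lemma side_compl {K : SimpleGraph α} (hpre : K.Preconnected) {c d : α}
    (hb : K.IsBridge s(c,d)) (x : α) :
    ¬ (K.deleteEdges {s(c,d)}).Reachable c x ↔ (K.deleteEdges {s(c,d)}).Reachable d x := by
  constructor
  · intro h
    rcases reach_del_or hpre c d x with h' | h'
    · exact absurd h' h
    · exact h'
  · intro h hc
    exact not_reach_other hb hc h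

lemma cross_walk {K : SimpleGraph α} {x y : α} (W : K.Walk x y) (P : α → Prop)
    (hx : P x) (hy : ¬ P y) : ∃ p q, K.Adj p q ∧ P p ∧ ¬ P q := by
  classical
  induction W with
  | nil => exact absurd hx hy
  | @cons u v w h W ih =>
    by_cases hv : P v
    · exact ih hv hy
    · exact ⟨u, v, h, hx, hv⟩

lemma walk_split {K : SimpleGraph α} :
    ∀ {p q u v : α} (W : K.Walk p q), W.edges.Nodup → s(u,v) ∈ W.edges →
    (∃ (W₁ : K.Walk p u) (W₂ : K.Walk v q), s(u,v) ∉ W₁.edges ∧ s(u,v) ∉ W₂.edges) ∨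
    (∃ (W₁ : K.Walk p v) (W₂ : K.Walk u q), s(u,v) ∉ W₁.edges ∧ s(u,v) ∉ W₂.edges) := by
  intro p q u v W
  induction W with
  | nil => intro _ h; simp at h
  | @cons a b c h W ih =>
    intro hnd hmem
    rw [Walk.edges_cons] at hnd hmem
    have hnd' := List.nodup_cons.mp hnd
    rcases List.mem_cons.mp hmem with hEq | htail
    · rw [Sym2.eq_iff] at hEq
      rcases hEq with ⟨h1, h2⟩ | ⟨h1, h2⟩
      · subst h1; subst h2
        refine Or.inl ⟨Walk.nil, W, by simp, ?_⟩
        first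
        | exact hnd'.1
        | (rw [Sym2.eq_swap]; exact hnd'.1)
      · subst h1; subst h2
        refine Or.inr ⟨Walk.nil, W, by simp, ?_⟩
        first
        | exact hnd'.1
        | (rw [Sym2.eq_swap]; exact hnd'.1)
    · have hneq : s(u,v) ≠ s(a,b) := by
        intro hEq; rw [hEq] at htail; exact hnd'.1 htail
      rcases ih hnd'.2 htail with ⟨W₁, W₂, h1, h2⟩ | ⟨W₁, W₂, h1, h2⟩
      · refine Or.inl ⟨Walk.cons h W₁, W₂, ?_, h2⟩
        rw [Walk.edges_cons]
        simp only [List.mem_cons]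
        rintro (hc | hc)
        · exact hneq hc
        · exact h1 hc
      · refine Or.inr ⟨Walk.cons h W₁, W₂, ?_, h2⟩
        rw [Walk.edges_cons]
        simp only [List.mem_cons]
        rintro (hc | hc)
        · exact hneq hc
        · exact h1 hc

lemma exists_separating_bridge {K : SimpleGraph α} (hpre : K.Preconnected) {p q : α}
    (hn : ¬ (bicompGraph K).Reachable p q) :
    ∃ c d, K.IsBridge s(c,d) ∧ ¬ (K.deleteEdges {s(c,d)}).Reachable p q := by
  classical
  obtain ⟨W⟩ := hpre p q
  have hPath := W.toPath
  set Pth : K.Walk p q := (W.toPath : K.Walk p q) with hPdef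
  have hpnd : Pth.edges.Nodup := W.toPath.prop.isTrail.edges_nodup
  by_cases hex : ∃ e ∈ Pth.edges, K.IsBridge e
  · obtain ⟨e, he, hbr⟩ := hex
    induction e with
    | h u v =>
      refine ⟨u, v, hbr, fun hreach => ?_⟩
      have hnb := ((isBridge_iff' hpre).mp hbr).2
      rcases walk_split Pth hpnd he with ⟨W₁, W₂, h1, h2⟩ | ⟨W₁, W₂, h1, h2⟩
      · have r1 : (K.deleteEdges {s(u,v)}).Reachable p u :=
          ⟨W₁.toDeleteEdges {s(u,v)} (fun e' he' => by
            simp only [Set.mem_singleton_iff]; intro hEq; exact h1 (hEq ▸ he'))⟩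
        have r2 : (K.deleteEdges {s(u,v)}).Reachable v q :=
          ⟨W₂.toDeleteEdges {s(u,v)} (fun e' he' => by
            simp only [Set.mem_singleton_iff]; intro hEq; exact h2 (hEq ▸ he'))⟩
        exact hnb ((r1.symm.trans hreach).trans r2.symm)
      · have r1 : (K.deleteEdges {s(u,v)}).Reachable p v :=
          ⟨W₁.toDeleteEdges {s(u,v)} (fun e' he' => by
            simp only [Set.mem_singleton_iff]; intro hEq; exact h1 (hEq ▸ he'))⟩
        have r2 : (K.deleteEdges {s(u,v)}).Reachable u q :=
          ⟨W₂.toDeleteEdges {s(u,v)} (fun e' he' => by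
            simp only [Set.mem_singleton_iff]; intro hEq; exact h2 (hEq ▸ he'))⟩
        exact hnb (((r1.symm.trans hreach).trans r2.symm).symm)
  · push_neg at hex
    refine absurd ⟨Pth.toDeleteEdges {e | K.IsBridge e} (fun e' he' => hex e' he')⟩ hn

/-- A newly added edge between vertices already connected in the smaller graph is
not a bridge of the larger graph; moreover its endpoints are adjacent in the
bridgeless part. -/
lemma new_nonbridge {K K' : SimpleGraph α} (hle : K ≤ K') (hpre : K.Preconnected)
    {r s' : α} (hK' : K'.Adj r s') (hK : ¬ K.Adj r s') :
    (bicompGraph K').Adj r s' := by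
  have hsub : K ≤ K'.deleteEdges {s(r,s')} := by
    intro a b hab
    rw [deleteEdges_adj]
    refine ⟨hle hab, ?_⟩
    simp only [Set.mem_singleton_iff, Sym2.eq_iff]
    rintro (⟨rfl, rfl⟩ | ⟨rfl, rfl⟩)
    · exact hK hab
    · exact hK hab.symm
  have hnb : ¬ K'.IsBridge s(r,s') := by
    rw [isBridge_iff' (hpre.mono hle)]
    rintro ⟨-, hnr⟩
    exact hnr ((hpre r s').mono hsub)
  simp only [bicompGraph, deleteEdges_adj, Set.mem_setOf_eq]
  exact ⟨hK', hnb⟩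

/-- An old bridge crossed by a new edge is no longer a bridge. -/
lemma bridge_killed {K K' : SimpleGraph α} (hle : K ≤ K') (hpre : K.Preconnected)
    {c d : α} (hb : K.IsBridge s(c,d)) {r s' : α} (hadj : K'.Adj r s')
    (hr : (K.deleteEdges {s(c,d)}).Reachable c r)
    (hs : ¬ (K.deleteEdges {s(c,d)}).Reachable c s')
    (hne : s(r,s') ≠ s(c,d)) : ¬ K'.IsBridge s(c,d) := by
  have hdel : K.deleteEdges {s(c,d)} ≤ K'.deleteEdges {s(c,d)} := by
    intro a b hab
    rw [deleteEdges_adj] at hab ⊢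
    exact ⟨hle hab.1, hab.2⟩
  have h1 : (K'.deleteEdges {s(c,d)}).Reachable c r := hr.mono hdel
  have h2 : (K'.deleteEdges {s(c,d)}).Adj r s' := by
    rw [deleteEdges_adj]
    exact ⟨hadj, by simpa using hne⟩
  have h3 : (K.deleteEdges {s(c,d)}).Reachable d s' := (side_compl hpre hb s').mp hs
  rw [isBridge_iff' (hpre.mono hle)]
  rintro ⟨-, hnr⟩
  exact hnr ((h1.trans h2.reachable).trans (h3.mono hdel).symm)

/-- For a bridge of both graphs, the two sides agree. -/
lemma side_eq {K K' : SimpleGraph α} (hle : K ≤ K') (hpre : K.Preconnected)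
    {c d : α} (hbK : K.IsBridge s(c,d)) (hbK' : K'.IsBridge s(c,d)) (x : α) :
    (K'.deleteEdges {s(c,d)}).Reachable c x ↔ (K.deleteEdges {s(c,d)}).Reachable c x := by
  have hdel : K.deleteEdges {s(c,d)} ≤ K'.deleteEdges {s(c,d)} := by
    intro a b hab
    rw [deleteEdges_adj] at hab ⊢
    exact ⟨hle hab.1, hab.2⟩
  constructor
  · intro h
    by_contra hc
    have h3 : (K.deleteEdges {s(c,d)}).Reachable d x := (side_compl hpre hbK x).mp hc
    exact ((isBridge_iff' (hpre.mono hle)).mp hbK').2 (h.trans (h3.mono hdel).symm)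
  · exact fun h => h.mono hdel

/-- Main work-horse: if two vertices are not connected in the bridgeless part of `K'`,
there is a common bridge of `K` and `K'` separating them (in `K`), oriented so that
the `c`-side contains `p`, and such that no `K'`-new edge crosses it. -/
lemma workhorse {K K' : SimpleGraph α} (hle : K ≤ K') (hpre : K.Preconnected)
    {p q : α} (hn : ¬ (bicompGraph K').Reachable p q) :
    ∃ c d, K.IsBridge s(c,d) ∧ K'.IsBridge s(c,d) ∧
      (K.deleteEdges {s(c,d)}).Reachable c p ∧
      ¬ (K.deleteEdges {s(c,d)}).Reachable c q ∧
      ∀ r s', K'.Adj r s' → ¬ K.Adj r s' →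
        ((K.deleteEdges {s(c,d)}).Reachable c r ↔ (K.deleteEdges {s(c,d)}).Reachable c s') := by
  have hpre' : K'.Preconnected := hpre.mono hle
  obtain ⟨c₀, d₀, hbr', hnr'⟩ := exists_separating_bridge hpre' hn
  have hadj₀ : K.Adj c₀ d₀ := by
    by_contra hc
    have := new_nonbridge hle hpre ((isBridge_iff' hpre').mp hbr').1 hc
    simp only [bicompGraph, deleteEdges_adj, Set.mem_setOf_eq] at this
    exact this.2 hbr'
  have hbrK : K.IsBridge s(c₀,d₀) := isBridge_of_le hle hadj₀ hbr'
  have hdel : K.deleteEdges {s(c₀,d₀)} ≤ K'.deleteEdges {s(c₀,d₀)} := by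
    intro a b hab
    rw [deleteEdges_adj] at hab ⊢
    exact ⟨hle hab.1, hab.2⟩
  have hnrK : ¬ (K.deleteEdges {s(c₀,d₀)}).Reachable p q := fun h => hnr' (h.mono hdel)
  have huncross : ∀ r s', K'.Adj r s' → ¬ K.Adj r s' →
      ((K.deleteEdges {s(c₀,d₀)}).Reachable c₀ r ↔ (K.deleteEdges {s(c₀,d₀)}).Reachable c₀ s') := by
    intro r s' hadj hnadj
    have hne : s(r,s') ≠ s(c₀,d₀) := by
      intro hEq
      rw [Sym2.eq_iff] at hEq
      rcases hEq with ⟨rfl, rfl⟩ | ⟨rfl, rfl⟩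
      · exact hnadj hadj₀
      · exact hnadj hadj₀.symm
    constructor
    · intro h1
      by_contra h2
      exact (bridge_killed hle hpre hbrK hadj h1 h2 hne) hbr'
    · intro h1
      by_contra h2
      exact (bridge_killed hle hpre hbrK hadj.symm h1 h2 (by rw [Sym2.eq_swap]; exact hne)) hbr'
  rcases reach_del_or hpre c₀ d₀ p with hp | hp
  · refine ⟨c₀, d₀, hbrK, hbr', hp, fun hq => hnrK (hp.symm.trans hq), huncross⟩
  · have hsw : s(d₀,c₀) = s(c₀,d₀) := Sym2.eq_swap
    refine ⟨d₀, c₀, ?_, ?_, ?_, ?_, ?_⟩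
    · rw [hsw]; exact hbrK
    · rw [hsw]; exact hbr'
    · rw [hsw]; exact hp
    · rw [hsw]
      intro hq
      exact hnrK (hp.symm.trans hq)
    · intro r s' h1 h2
      rw [hsw, ← side_compl hpre hbrK r, ← side_compl hpre hbrK s']
      exact not_congr (huncross r s' h1 h2)


lemma phi_dec {K K' : SimpleGraph α} (hle : K ≤ K') {β : Type*} (φ : β → α)
    (S : Set β) (hS : S.Finite) {x₁ x₂ : β} (h1 : x₁ ∈ S) (h2 : x₂ ∈ S)
    (hold : ¬ (bicompGraph K).Reachable (φ x₁) (φ x₂))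
    (hnew : (bicompGraph K').Reachable (φ x₁) (φ x₂)) :
    ((fun x => (bicompGraph K').connectedComponentMk (φ x)) '' S).ncard <
      ((fun x => (bicompGraph K).connectedComponentMk (φ x)) '' S).ncard := by
  classical
  set g : (bicompGraph K).ConnectedComponent → (bicompGraph K').ConnectedComponent :=
    ConnectedComponent.map (Hom.ofLE (bicomp_mono hle)) with hg
  have key : ∀ x : β, g ((bicompGraph K).connectedComponentMk (φ x)) =
      (bicompGraph K').connectedComponentMk (φ x) := by
    intro x
    rw [hg]
    rw [ConnectedComponent.map_mk]
    rfl
  have himg : (fun x => (bicompGraph K').connectedComponentMk (φ x)) '' S =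
      g '' ((fun x => (bicompGraph K).connectedComponentMk (φ x)) '' S) := by
    rw [Set.image_image]
    exact Set.image_congr (fun x _ => (key x).symm)
  rw [himg]
  have hfin : ((fun x => (bicompGraph K).connectedComponentMk (φ x)) '' S).Finite :=
    hS.image _
  have hle' := Set.ncard_image_le (f := g) hfin
  rcases lt_or_eq_of_le hle' with hlt | heq
  · exact hlt
  · exfalso
    have hinj := Set.injOn_of_ncard_image_eq heq hfin
    have hmem1 : (bicompGraph K).connectedComponentMk (φ x₁) ∈
        (fun x => (bicompGraph K).connectedComponentMk (φ x)) '' S := ⟨x₁, h1, rfl⟩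
    have hmem2 : (bicompGraph K).connectedComponentMk (φ x₂) ∈
        (fun x => (bicompGraph K).connectedComponentMk (φ x)) '' S := ⟨x₂, h2, rfl⟩
    have : (bicompGraph K).connectedComponentMk (φ x₁) =
        (bicompGraph K).connectedComponentMk (φ x₂) := by
      apply hinj hmem1 hmem2
      rw [key, key]
      exact ConnectedComponent.eq.mpr hnew
    exact hold (ConnectedComponent.eq.mp this)

section Superpose
variable {β : Type*} {G : SimpleGraph α} {H : SimpleGraph β} {φ : β ↪ α}

lemma G_le_sp (Z : Set β) : G ≤ superpose G (restrict H Z) φ := le_sup_left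

lemma sp_mono {Z Z' : Set β} (h : Z ⊆ Z') :
    superpose G (restrict H Z) φ ≤ superpose G (restrict H Z') φ := by
  refine sup_le_sup_left ?_ G
  intro a b hab
  rw [map_adj] at hab ⊢
  obtain ⟨u, v, huv, h1, h2⟩ := hab
  exact ⟨u, v, ⟨h (huv.1), h (huv.2.1), huv.2.2⟩, h1, h2⟩

lemma sp_le_full (Z : Set β) : superpose G (restrict H Z) φ ≤ superpose G H φ := by
  refine sup_le_sup_left ?_ G
  intro a b hab
  rw [map_adj] at hab ⊢
  obtain ⟨u, v, huv, h1, h2⟩ := hab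
  exact ⟨u, v, huv.2.2, h1, h2⟩

lemma sp_adj_new {Z : Set β} {r s' : α}
    (h1 : (superpose G (restrict H Z) φ).Adj r s') {Z' : Set β} (hZZ : Z' ⊆ Z)
    (h0 : ¬ (superpose G (restrict H Z') φ).Adj r s') :
    ∃ u v, u ∈ Z ∧ v ∈ Z ∧ H.Adj u v ∧ φ u = r ∧ φ v = s' ∧ ¬ (u ∈ Z' ∧ v ∈ Z') := by
  rcases h1 with hG | hmap
  · exact absurd (Or.inl hG : (superpose G (restrict H Z') φ).Adj r s') h0
  · rw [map_adj] at hmap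
    obtain ⟨u, v, huv, hr, hs⟩ := hmap
    refine ⟨u, v, huv.1, huv.2.1, huv.2.2, hr, hs, ?_⟩
    rintro ⟨hu, hv⟩
    exact h0 (Or.inr (by rw [map_adj]; exact ⟨u, v, ⟨hu, hv, huv.2.2⟩, hr, hs⟩))

lemma crossedge {X Z : Finset β} (hG : G.Connected)
    (hF : TwoEdgeConnected (superpose G H φ))
    (hX : ∀ x y : β, H.Adj x y → x ∈ X ∨ y ∈ X) (hXZ : X ⊆ Z)
    {c d : α} (hbr : (superpose G (restrict H (↑Z : Set β)) φ).IsBridge s(c,d)) :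
    ∃ x w, x ∈ X ∧ w ∉ Z ∧ H.Adj x w ∧
      ¬ (superpose G (restrict H (↑Z : Set β)) φ).Adj (φ x) (φ w) ∧
      (((superpose G (restrict H (↑Z : Set β)) φ).deleteEdges {s(c,d)}).Reachable c (φ x) ↔
        ¬ ((superpose G (restrict H (↑Z : Set β)) φ).deleteEdges {s(c,d)}).Reachable c (φ w)) := by
  classical
  set K' := superpose G (restrict H (↑Z : Set β)) φ with hK'
  have hadj' : K'.Adj c d := ((isBridge_iff' (hG.mono (G_le_sp _)).preconnected).mp hbr).1
  have hadjF : (superpose G H φ).Adj c d := sp_le_full (↑Z) hadj'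
  have hreachF : ((superpose G H φ).deleteEdges {s(c,d)}).Reachable c d := by
    have h2 := hF.2 s(c,d)
    rw [isBridge_iff' hF.1.preconnected] at h2
    push_neg at h2
    exact h2 hadjF
  obtain ⟨W⟩ := hreachF
  obtain ⟨p, q, hpq, hPp, hPq⟩ := cross_walk W
    (fun x => (K'.deleteEdges {s(c,d)}).Reachable c x)
    (Reachable.refl c) ((isBridge_iff' (hG.mono (G_le_sp _)).preconnected).mp hbr).2
  rw [deleteEdges_adj] at hpq
  have hne : s(p,q) ≠ s(c,d) := by simpa using hpq.2
  have hnK' : ¬ K'.Adj p q := by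
    intro hc
    apply hPq
    exact hPp.trans (Adj.reachable (by rw [deleteEdges_adj]; exact ⟨hc, by simpa using hne⟩))
  have hFadj : (superpose G H φ).Adj p q := hpq.1
  rcases hFadj with hGadj | hmap
  · exact absurd (Or.inl hGadj : K'.Adj p q) hnK'
  · rw [map_adj] at hmap
    obtain ⟨u, v, huv, hu, hv⟩ := hmap
    have hnb : ¬ (u ∈ Z ∧ v ∈ Z) := by
      rintro ⟨h1, h2⟩
      exact hnK' (Or.inr (by rw [map_adj]; exact ⟨u, v, ⟨h1, h2, huv⟩, hu, hv⟩))
    rcases hX u v huv with hX1 | hX2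
    · refine ⟨u, v, hX1, fun hvZ => hnb ⟨hXZ hX1, hvZ⟩, huv, ?_, ?_⟩
      · rw [hu, hv]; exact hnK'
      · rw [hu, hv]
        exact iff_of_true hPp hPq
    · refine ⟨v, u, hX2, fun huZ => hnb ⟨huZ, hXZ hX2⟩, huv.symm, ?_, ?_⟩
      · rw [hu, hv]; exact fun h => hnK' h.symm
      · rw [hu, hv]
        exact iff_of_false hPq (by simpa using hPp)

end Superpose

lemma ne_of_not_adj {α : Type*} {K : SimpleGraph α} {r s' c d : α}
    (h1 : ¬ K.Adj r s') (h2 : K.Adj c d) : s(r,s') ≠ s(c,d) := by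
  intro hEq
  rw [Sym2.eq_iff] at hEq
  rcases hEq with ⟨rfl, rfl⟩ | ⟨rfl, rfl⟩
  · exact h1 h2
  · exact h1 h2.symm

lemma reach_congr_adj {α : Type*} {K : SimpleGraph α} {e₁ : Sym2 α} {c₀ d₀ base : α}
    (hadj : K.Adj c₀ d₀) (hne : s(c₀,d₀) ≠ e₁) :
    ((K.deleteEdges {e₁}).Reachable base c₀ ↔ (K.deleteEdges {e₁}).Reachable base d₀) := by
  have h : (K.deleteEdges {e₁}).Adj c₀ d₀ := by
    rw [deleteEdges_adj]; exact ⟨hadj, by simpa using hne⟩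
  exact ⟨fun hh => hh.trans h.reachable, fun hh => hh.trans h.symm.reachable⟩

lemma step {α β : Type*} [Fintype α] [Fintype β] [DecidableEq β]
    (G : SimpleGraph α) (hG : G.Connected) (H : SimpleGraph β) (φ : β ↪ α)
    (hF : TwoEdgeConnected (superpose G H φ))
    (X : Finset β) (hX : ∀ x y : β, H.Adj x y → x ∈ X ∨ y ∈ X)
    (Y : Finset β) (hd : Disjoint Y X)
    (hinv : ∀ y ∈ Y, ∃ x ∈ X,
      (bicompGraph (superpose G (restrict H ↑(X ∪ Y)) φ)).Reachable (φ x) (φ y))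
    {x₁ x₂ : β} (hx₁ : x₁ ∈ X) (hx₂ : x₂ ∈ X)
    (hsep : ¬ (bicompGraph (superpose G (restrict H ↑(X ∪ Y)) φ)).Reachable (φ x₁) (φ x₂)) :
    ∃ Y' : Finset β, Disjoint Y' X ∧ Y'.card ≤ Y.card + 2 ∧
      (∀ y ∈ Y', ∃ x ∈ X,
        (bicompGraph (superpose G (restrict H ↑(X ∪ Y')) φ)).Reachable (φ x) (φ y)) ∧
      ((fun x => (bicompGraph (superpose G (restrict H ↑(X ∪ Y')) φ)).connectedComponentMk (φ x))
          '' (↑X : Set β)).ncard <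
      ((fun x => (bicompGraph (superpose G (restrict H ↑(X ∪ Y)) φ)).connectedComponentMk (φ x))
          '' (↑X : Set β)).ncard := by
  classical
  set K₀ : SimpleGraph α := superpose G (restrict H ↑(X ∪ Y)) φ with hK₀def
  have hpre₀ : K₀.Preconnected := ((hG.mono (G_le_sp _)).preconnected)
  -- the family of mark-separating cuts, minimized by side cardinality
  set NS : Set ℕ := {n | ∃ c d, K₀.IsBridge s(c,d) ∧
      (∃ x ∈ X, (K₀.deleteEdges {s(c,d)}).Reachable c (φ x)) ∧
      (∃ x ∈ X, ¬ (K₀.deleteEdges {s(c,d)}).Reachable c (φ x)) ∧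
      ({x | (K₀.deleteEdges {s(c,d)}).Reachable c x}).ncard = n} with hNSdef
  have hNSne : NS.Nonempty := by
    obtain ⟨c₁, d₁, hb₁, hnr₁⟩ := exists_separating_bridge hpre₀ hsep
    rcases reach_del_or hpre₀ c₁ d₁ (φ x₁) with h1 | h1
    · refine ⟨_, c₁, d₁, hb₁, ⟨x₁, hx₁, h1⟩, ⟨x₂, hx₂, fun h2 => hnr₁ (h1.symm.trans h2)⟩, rfl⟩
    · have hsw : s(d₁,c₁) = s(c₁,d₁) := Sym2.eq_swap
      refine ⟨_, d₁, c₁, by rw [hsw]; exact hb₁, ⟨x₁, hx₁, by rw [hsw]; exact h1⟩,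
        ⟨x₂, hx₂, ?_⟩, rfl⟩
      rw [hsw]
      exact fun h2 => hnr₁ (h1.symm.trans h2)
  obtain ⟨a, b, hbab, ⟨mA, hmAX, hmA⟩, ⟨z, hzX, hz⟩, hcard⟩ := Nat.sInf_mem hNSne
  have hminim : ∀ c d, K₀.IsBridge s(c,d) →
      (∃ x ∈ X, (K₀.deleteEdges {s(c,d)}).Reachable c (φ x)) →
      (∃ x ∈ X, ¬ (K₀.deleteEdges {s(c,d)}).Reachable c (φ x)) →
      ({x | (K₀.deleteEdges {s(a,b)}).Reachable a x}).ncard ≤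
        ({x | (K₀.deleteEdges {s(c,d)}).Reachable c x}).ncard := by
    intro c d h1 h2 h3
    rw [hcard]
    exact Nat.sInf_le ⟨c, d, h1, h2, h3, rfl⟩
  -- M1 : all marks on the `a`-side are 2-edge-connected to `a`
  have hM1 : ∀ x ∈ X, (K₀.deleteEdges {s(a,b)}).Reachable a (φ x) →
      (bicompGraph K₀).Reachable a (φ x) := by
    intro x hxX hxA
    by_contra hc
    have core : ∀ c d, K₀.IsBridge s(c,d) →
        (K₀.deleteEdges {s(c,d)}).Reachable c a →
        ¬ (K₀.deleteEdges {s(c,d)}).Reachable c (φ x) → False := by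
      intro c d hbcd hRa hRx
      have hKadjcd : K₀.Adj c d := ((isBridge_iff' hpre₀).mp hbcd).1
      have hKadjab : K₀.Adj a b := ((isBridge_iff' hpre₀).mp hbab).1
      have hne_e : s(c,d) ≠ s(a,b) := by
        intro hEq
        rw [Sym2.eq_iff] at hEq
        rcases hEq with ⟨h1, h2⟩ | ⟨h1, h2⟩
        · rw [h1, h2] at hRx
          exact hRx hxA
        · rw [h1, h2] at hRa
          have hsw : s(b,a) = s(a,b) := Sym2.eq_swap
          rw [hsw] at hRa
          exact ((isBridge_iff' hpre₀).mp hbab).2 hRa.symm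
      by_cases hcA : (K₀.deleteEdges {s(a,b)}).Reachable a c
      · -- both endpoints of the separating bridge lie inside the minimal side: contradiction
        -- with minimality, using the cut (d,c).
        have hdA : (K₀.deleteEdges {s(a,b)}).Reachable a d :=
          (reach_congr_adj hKadjcd hne_e).mp hcA
        have hRb : (K₀.deleteEdges {s(c,d)}).Reachable c b :=
          (reach_congr_adj hKadjab (fun hEq => hne_e hEq.symm)).mp hRa
        have hRdx : (K₀.deleteEdges {s(c,d)}).Reachable d (φ x) :=
          (side_compl hpre₀ hbcd (φ x)).mp hRx
        have hcomp : ∀ y, ¬ (K₀.deleteEdges {s(a,b)}).Reachable a y →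
            (K₀.deleteEdges {s(c,d)}).Reachable c y := by
          intro y hy
          have hby : (K₀.deleteEdges {s(a,b)}).Reachable b y :=
            (side_compl hpre₀ hbab y).mp hy
          have h1 : (K₀.deleteEdges {s(c,d)}).Reachable y b :=
            reach_del_of_side (not_reach_other hbab hdA) hby (Reachable.refl b)
          exact hRb.trans h1.symm
        have hRzc : (K₀.deleteEdges {s(c,d)}).Reachable c (φ z) := hcomp (φ z) hz
        have hndz : ¬ (K₀.deleteEdges {s(c,d)}).Reachable d (φ z) :=
          not_reach_other hbcd hRzc
        have hsw : s(d,c) = s(c,d) := Sym2.eq_swap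
        have hmle := hminim d c (by rw [hsw]; exact hbcd)
          ⟨x, hxX, by rw [hsw]; exact hRdx⟩ ⟨z, hzX, by rw [hsw]; exact hndz⟩
        have hseteq : {y | (K₀.deleteEdges {s(d,c)}).Reachable d y} =
            {y | (K₀.deleteEdges {s(c,d)}).Reachable d y} := by rw [hsw]
        rw [hseteq] at hmle
        have hssub : {y | (K₀.deleteEdges {s(c,d)}).Reachable d y} ⊂
            {y | (K₀.deleteEdges {s(a,b)}).Reachable a y} := by
          constructor
          · intro y hy
            by_contra hyn
            exact not_reach_other hbcd (hcomp y hyn) hy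
          · intro hts
            exact not_reach_other hbcd hRa (hts (Reachable.refl a))
        have hlt := Set.ncard_lt_ncard hssub (Set.toFinite _)
        omega
      · have hdA' : ¬ (K₀.deleteEdges {s(a,b)}).Reachable a d :=
          fun h => hcA ((reach_congr_adj hKadjcd hne_e).mpr h)
        have hreach : (K₀.deleteEdges {s(c,d)}).Reachable a (φ x) :=
          reach_del_of_side hdA' (Reachable.refl a) hxA
        exact hRx (hRa.trans hreach)
    obtain ⟨c, d, hbcd, hncd⟩ := exists_separating_bridge hpre₀ hc
    rcases reach_del_or hpre₀ c d a with hca | hda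
    · exact core c d hbcd hca (fun h2 => hncd (hca.symm.trans h2))
    · have hsw : s(d,c) = s(c,d) := Sym2.eq_swap
      apply core d c (by rw [hsw]; exact hbcd)
      · rw [hsw]; exact hda
      · rw [hsw]; exact fun h2 => hncd (hda.symm.trans h2)

  -- the bridge (a,b) of K₀ is crossed by an F-edge
  have hXsub0 : X ⊆ X ∪ Y := Finset.subset_union_left
  obtain ⟨xs0, w0, hxs0X, hw0Z, hHadj0, hnadj0, hiff0⟩ :=
    crossedge (G := G) (H := H) (φ := φ) hG hF hX hXsub0 (by rw [← hK₀def]; exact hbab)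
  rw [← hK₀def] at hnadj0 hiff0
  by_cases hcaseii : (K₀.deleteEdges {s(a,b)}).Reachable a (φ xs0)
  case neg =>
    -- CASE (ii) : the X-endpoint is outside the minimal side
    have hw0A : (K₀.deleteEdges {s(a,b)}).Reachable a (φ w0) := by
      by_contra hc2
      exact hcaseii (hiff0.mpr hc2)
    have hsub01 : (↑(X ∪ Y) : Set β) ⊆ (↑(X ∪ insert w0 Y) : Set β) := by
      intro u hu
      simp only [Finset.coe_union, Finset.coe_insert, Set.mem_union] at hu ⊢
      rcases hu with hu | hu
      · exact Or.inl hu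
      · exact Or.inr (Or.inr hu)
    set K₁ : SimpleGraph α := superpose G (restrict H ↑(X ∪ insert w0 Y)) φ with hK₁def
    have hK₀K₁ : K₀ ≤ K₁ := by rw [hK₀def, hK₁def]; exact sp_mono hsub01
    have hfadj : K₁.Adj (φ xs0) (φ w0) := by
      rw [hK₁def]
      refine Or.inr ?_
      rw [map_adj]
      exact ⟨xs0, w0, ⟨by simp [hxs0X], by simp, hHadj0⟩, rfl, rfl⟩
    have hKadjab : K₀.Adj a b := ((isBridge_iff' hpre₀).mp hbab).1
    have hBR1 : (bicompGraph K₁).Reachable a (φ xs0) := by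
      by_contra hcc
      obtain ⟨c, d, hbK₀, hbK₁, hRca, hRcnx, hunc⟩ := workhorse hK₀K₁ hpre₀ hcc
      have hKadjcd : K₀.Adj c d := ((isBridge_iff' hpre₀).mp hbK₀).1
      have hRcnw : ¬ (K₀.deleteEdges {s(c,d)}).Reachable c (φ w0) := by
        intro h
        exact hRcnx ((hunc _ _ hfadj hnadj0).mpr h)
      have hkill : ¬ K₁.IsBridge s(a,b) :=
        bridge_killed hK₀K₁ hpre₀ hbab hfadj.symm hw0A hcaseii
          (ne_of_not_adj (fun h => hnadj0 h.symm) hKadjab)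
      have hnecd : s(c,d) ≠ s(a,b) := fun hEq => hkill (hEq ▸ hbK₁)
      by_cases hcA : (K₀.deleteEdges {s(a,b)}).Reachable a c
      · have hdA : (K₀.deleteEdges {s(a,b)}).Reachable a d :=
          (reach_congr_adj hKadjcd hnecd).mp hcA
        have hRcb : (K₀.deleteEdges {s(c,d)}).Reachable c b :=
          (reach_congr_adj hKadjab (fun h => hnecd h.symm)).mp hRca
        have h1 : (K₀.deleteEdges {s(c,d)}).Reachable (φ xs0) b :=
          reach_del_of_side (not_reach_other hbab hdA)
            ((side_compl hpre₀ hbab _).mp hcaseii) (Reachable.refl b)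
        exact hRcnx (hRcb.trans h1.symm)
      · have hdA' : ¬ (K₀.deleteEdges {s(a,b)}).Reachable a d :=
          fun h => hcA ((reach_congr_adj hKadjcd hnecd).mpr h)
        have h1 : (K₀.deleteEdges {s(c,d)}).Reachable a (φ w0) :=
          reach_del_of_side hdA' (Reachable.refl a) hw0A
        exact hRcnw (hRca.trans h1)
    have hold : ¬ (bicompGraph K₀).Reachable (φ mA) (φ xs0) := by
      intro h
      exact hcaseii (hmA.trans (h.mono (bicomp_le_del hbab)))
    have hnew : (bicompGraph K₁).Reachable (φ mA) (φ xs0) :=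
      ((hM1 mA hmAX hmA).mono (bicomp_mono hK₀K₁)).symm.trans hBR1
    refine ⟨insert w0 Y, ?_, ?_, ?_, ?_⟩
    · rw [Finset.disjoint_insert_left]
      exact ⟨fun h => hw0Z (Finset.mem_union_left _ h), hd⟩
    · have := Finset.card_insert_le w0 Y
      omega
    · intro y hy
      rcases Finset.mem_insert.mp hy with rfl | hy
      · exact ⟨xs0, hxs0X, ((new_nonbridge hK₀K₁ hpre₀ hfadj hnadj0).reachable)⟩
      · obtain ⟨x', hx'X, hx'⟩ := hinv y hy
        exact ⟨x', hx'X, hx'.mono (bicomp_mono hK₀K₁)⟩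
    · exact phi_dec hK₀K₁ (fun x : β => φ x) (↑X : Set β) (X.finite_toSet)
        (Finset.mem_coe.mpr hmAX) (Finset.mem_coe.mpr hxs0X) hold hnew
  case pos =>
    -- CASE (i) : the X-endpoint is inside the minimal side
    have hw0A : ¬ (K₀.deleteEdges {s(a,b)}).Reachable a (φ w0) := hiff0.mp hcaseii
    -- the family 𝒢 of bridges separating a from φ z
    have hGGab : K₀.IsBridge s(a,b) ∧ (K₀.deleteEdges {s(a,b)}).Reachable a a ∧
        ¬ (K₀.deleteEdges {s(a,b)}).Reachable a (φ z) := ⟨hbab, Reachable.refl a, hz⟩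
    -- nestedness of the family
    have hN1 : ∀ c d c' d',
        (K₀.IsBridge s(c,d) ∧ (K₀.deleteEdges {s(c,d)}).Reachable c a ∧
          ¬ (K₀.deleteEdges {s(c,d)}).Reachable c (φ z)) →
        (K₀.IsBridge s(c',d') ∧ (K₀.deleteEdges {s(c',d')}).Reachable c' a ∧
          ¬ (K₀.deleteEdges {s(c',d')}).Reachable c' (φ z)) →
        {x | (K₀.deleteEdges {s(c,d)}).Reachable c x} ⊆
          {x | (K₀.deleteEdges {s(c',d')}).Reachable c' x} ∨
        {x | (K₀.deleteEdges {s(c',d')}).Reachable c' x} ⊆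
          {x | (K₀.deleteEdges {s(c,d)}).Reachable c x} := by
      intro c d c' d' h h'
      by_cases hEq : s(c',d') = s(c,d)
      · rw [Sym2.eq_iff] at hEq
        rcases hEq with ⟨h1, h2⟩ | ⟨h1, h2⟩
        · rw [h1, h2]
          exact Or.inl (subset_refl _)
        · exfalso
          have h2' := h'.2.1
          rw [h1, h2] at h2'
          have hsw : s(d,c) = s(c,d) := Sym2.eq_swap
          rw [hsw] at h2'
          exact not_reach_other h.1 h.2.1 h2'
      · have hadj' : K₀.Adj c' d' := ((isBridge_iff' hpre₀).mp h'.1).1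
        by_cases hc' : (K₀.deleteEdges {s(c,d)}).Reachable c c'
        · right
          intro y hy
          simp only [Set.mem_setOf_eq] at hy ⊢
          by_contra hyn
          have hdy : (K₀.deleteEdges {s(c,d)}).Reachable d y :=
            (side_compl hpre₀ h.1 y).mp hyn
          have hdz : (K₀.deleteEdges {s(c,d)}).Reachable d (φ z) :=
            (side_compl hpre₀ h.1 (φ z)).mp h.2.2
          have hd'in : (K₀.deleteEdges {s(c,d)}).Reachable c d' :=
            (reach_congr_adj hadj' hEq).mp hc'
          have h1 : (K₀.deleteEdges {s(c',d')}).Reachable y (φ z) :=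
            reach_del_of_side (not_reach_other h.1 hd'in) hdy hdz
          exact h'.2.2 (hy.trans h1)
        · left
          intro y hy
          simp only [Set.mem_setOf_eq] at hy ⊢
          have hd' : ¬ (K₀.deleteEdges {s(c,d)}).Reachable c d' :=
            fun hh => hc' ((reach_congr_adj hadj' hEq).mpr hh)
          have h1 : (K₀.deleteEdges {s(c',d')}).Reachable y a :=
            reach_del_of_side hd' hy h.2.1
          exact h'.2.1.trans h1.symm
    -- every member of the family contains the whole minimal side
    have hN2 : ∀ c d,
        (K₀.IsBridge s(c,d) ∧ (K₀.deleteEdges {s(c,d)}).Reachable c a ∧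
          ¬ (K₀.deleteEdges {s(c,d)}).Reachable c (φ z)) →
        ∀ y, (K₀.deleteEdges {s(a,b)}).Reachable a y →
          (K₀.deleteEdges {s(c,d)}).Reachable c y := by
      intro c d hg
      have hmarkin : ∃ x ∈ X, (K₀.deleteEdges {s(c,d)}).Reachable c (φ x) :=
        ⟨mA, hmAX, hg.2.1.trans ((hM1 mA hmAX hmA).mono (bicomp_le_del hg.1))⟩
      rcases hN1 a b c d hGGab hg with hsub | hsub
      · intro y hy
        exact hsub hy
      · have hcut := hminim c d hg.1 hmarkin ⟨z, hzX, hg.2.2⟩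
        have heq := Set.eq_of_subset_of_ncard_le hsub hcut (Set.toFinite _)
        intro y hy
        have hy' : y ∈ {x | (K₀.deleteEdges {s(a,b)}).Reachable a x} := hy
        rw [← heq] at hy'
        exact hy'
    -- the admissible crossing pairs, maximized
    set Adm : Set ℕ := {n | ∃ x w c d,
        (x ∈ X ∧ w ∉ X ∪ Y ∧ H.Adj x w ∧ ¬ K₀.Adj (φ x) (φ w) ∧
          (K₀.deleteEdges {s(a,b)}).Reachable a (φ x) ∧
          ¬ (K₀.deleteEdges {s(a,b)}).Reachable a (φ w)) ∧
        (K₀.IsBridge s(c,d) ∧ (K₀.deleteEdges {s(c,d)}).Reachable c a ∧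
          ¬ (K₀.deleteEdges {s(c,d)}).Reachable c (φ z)) ∧
        ¬ (K₀.deleteEdges {s(c,d)}).Reachable c (φ w) ∧
        ({y | (K₀.deleteEdges {s(c,d)}).Reachable c y}).ncard = n} with hAdmdef
    have hAdmne : Adm.Nonempty :=
      ⟨_, xs0, w0, a, b, ⟨hxs0X, hw0Z, hHadj0, hnadj0, hcaseii, hw0A⟩, hGGab, hw0A, rfl⟩
    have hAdmbdd : BddAbove Adm := by
      refine ⟨Nat.card α, ?_⟩
      rintro n ⟨x, w, c, d, -, -, -, rfl⟩
      calc ({y | (K₀.deleteEdges {s(c,d)}).Reachable c y}).ncard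
          ≤ (Set.univ : Set α).ncard := Set.ncard_le_ncard (Set.subset_univ _) Set.finite_univ
        _ = Nat.card α := Set.ncard_univ α
    obtain ⟨xs, vs, cs, ds, hSPs, hGGs, houts, hcards⟩ := Nat.sSup_mem hAdmne hAdmbdd
    -- add vs
    have hsub01 : (↑(X ∪ Y) : Set β) ⊆ (↑(X ∪ insert vs Y) : Set β) := by
      intro u hu
      simp only [Finset.coe_union, Finset.coe_insert, Set.mem_union] at hu ⊢
      rcases hu with hu | hu
      · exact Or.inl hu
      · exact Or.inr (Or.inr hu)
    set K₁ : SimpleGraph α := superpose G (restrict H ↑(X ∪ insert vs Y)) φ with hK₁def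
    have hK₀K₁ : K₀ ≤ K₁ := by rw [hK₀def, hK₁def]; exact sp_mono hsub01
    have hpre₁ : K₁.Preconnected := hpre₀.mono hK₀K₁
    have hfadj : K₁.Adj (φ xs) (φ vs) := by
      rw [hK₁def]
      refine Or.inr ?_
      rw [map_adj]
      exact ⟨xs, vs, ⟨by simp [hSPs.1], by simp, hSPs.2.2.1⟩, rfl, rfl⟩
    have hnadj_f : ¬ K₀.Adj (φ xs) (φ vs) := hSPs.2.2.2.1
    have hxsA : (K₀.deleteEdges {s(a,b)}).Reachable a (φ xs) := hSPs.2.2.2.2.1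
    by_cases hGG1 : ∃ c d,
        (K₀.IsBridge s(c,d) ∧ (K₀.deleteEdges {s(c,d)}).Reachable c a ∧
          ¬ (K₀.deleteEdges {s(c,d)}).Reachable c (φ z)) ∧
        (K₀.deleteEdges {s(c,d)}).Reachable c (φ vs)
    case neg =>
      -- CASE α : one more vertex merges the side class with the class of z
      push_neg at hGG1
      have hBR1 : (bicompGraph K₁).Reachable a (φ z) := by
        by_contra hcc
        obtain ⟨c₀, d₀, hbK₀', hbK₁', hR0a, hR0nz, hunc⟩ := workhorse hK₀K₁ hpre₀ hcc
        have hGG0 : K₀.IsBridge s(c₀,d₀) ∧ (K₀.deleteEdges {s(c₀,d₀)}).Reachable c₀ a ∧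
            ¬ (K₀.deleteEdges {s(c₀,d₀)}).Reachable c₀ (φ z) := ⟨hbK₀', hR0a, hR0nz⟩
        have hR0xs : (K₀.deleteEdges {s(c₀,d₀)}).Reachable c₀ (φ xs) :=
          hN2 c₀ d₀ hGG0 _ hxsA
        exact hGG1 c₀ d₀ hGG0 ((hunc _ _ hfadj hnadj_f).mp hR0xs)
      have hold : ¬ (bicompGraph K₀).Reachable (φ mA) (φ z) := by
        intro h
        exact hz (hmA.trans (h.mono (bicomp_le_del hbab)))
      have hnew : (bicompGraph K₁).Reachable (φ mA) (φ z) :=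
        ((hM1 mA hmAX hmA).mono (bicomp_mono hK₀K₁)).symm.trans hBR1
      refine ⟨insert vs Y, ?_, ?_, ?_, ?_⟩
      · rw [Finset.disjoint_insert_left]
        exact ⟨fun h => hSPs.2.1 (Finset.mem_union_left _ h), hd⟩
      · have := Finset.card_insert_le vs Y
        omega
      · intro y hy
        rcases Finset.mem_insert.mp hy with rfl | hy
        · exact ⟨xs, hSPs.1, ((new_nonbridge hK₀K₁ hpre₀ hfadj hnadj_f).reachable)⟩
        · obtain ⟨x', hx'X, hx'⟩ := hinv y hy
          exact ⟨x', hx'X, hx'.mono (bicomp_mono hK₀K₁)⟩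
      · exact phi_dec hK₀K₁ (fun x : β => φ x) (↑X : Set β) (X.finite_toSet)
          (Finset.mem_coe.mpr hmAX) (Finset.mem_coe.mpr hzX) hold hnew
    case pos =>
      -- CASE β : some member of the family still has φ vs inside
      set Admβ : Set ℕ := {n | ∃ c d,
          (K₀.IsBridge s(c,d) ∧ (K₀.deleteEdges {s(c,d)}).Reachable c a ∧
            ¬ (K₀.deleteEdges {s(c,d)}).Reachable c (φ z)) ∧
          (K₀.deleteEdges {s(c,d)}).Reachable c (φ vs) ∧
          ({y | (K₀.deleteEdges {s(c,d)}).Reachable c y}).ncard = n} with hAdmβdef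
      have hβne : Admβ.Nonempty := by
        obtain ⟨c, d, h1, h2⟩ := hGG1
        exact ⟨_, c, d, h1, h2, rfl⟩
      obtain ⟨c', d', hGG', hvin', hcard'⟩ := Nat.sInf_mem hβne
      have hminβ : ∀ c d,
          (K₀.IsBridge s(c,d) ∧ (K₀.deleteEdges {s(c,d)}).Reachable c a ∧
            ¬ (K₀.deleteEdges {s(c,d)}).Reachable c (φ z)) →
          (K₀.deleteEdges {s(c,d)}).Reachable c (φ vs) →
          ({y | (K₀.deleteEdges {s(c',d')}).Reachable c' y}).ncard ≤
            ({y | (K₀.deleteEdges {s(c,d)}).Reachable c y}).ncard := by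
        intro c d h1 h2
        rw [hcard']
        exact Nat.sInf_le ⟨c, d, h1, h2, rfl⟩
      have hadjγ : K₀.Adj c' d' := ((isBridge_iff' hpre₀).mp hGG'.1).1
      by_cases hbr1 : K₁.IsBridge s(c',d')
      case pos =>
        -- β-ii : the member is still a bridge after adding vs; cross it
        have hXsub1 : X ⊆ X ∪ insert vs Y := Finset.subset_union_left
        obtain ⟨x₂, w, hx₂X, hwZ, hHadj₂, hnadj₂, hiff₂⟩ :=
          crossedge (G := G) (H := H) (φ := φ) hG hF hX hXsub1
            (by rw [← hK₁def]; exact hbr1)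
        rw [← hK₁def] at hnadj₂ hiff₂
        have hsdeq := fun x => side_eq hK₀K₁ hpre₀ hGG'.1 hbr1 x
        rw [hsdeq, hsdeq] at hiff₂
        have hnadj₂₀ : ¬ K₀.Adj (φ x₂) (φ w) := fun h => hnadj₂ (hK₀K₁ h)
        have hwXY : w ∉ X ∪ Y := by
          intro h
          apply hwZ
          rcases Finset.mem_union.mp h with h | h
          · exact Finset.mem_union_left _ h
          · exact Finset.mem_union_right _ (Finset.mem_insert_of_mem h)
        have hsub12 : (↑(X ∪ insert vs Y) : Set β) ⊆ (↑(X ∪ insert w (insert vs Y)) : Set β) := by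
          intro u hu
          simp only [Finset.coe_union, Finset.coe_insert, Set.mem_union] at hu ⊢
          rcases hu with hu | hu
          · exact Or.inl hu
          · exact Or.inr (Or.inr hu)
        set K₂ : SimpleGraph α := superpose G (restrict H ↑(X ∪ insert w (insert vs Y))) φ
          with hK₂def
        have hK₁K₂ : K₁ ≤ K₂ := by rw [hK₁def, hK₂def]; exact sp_mono hsub12
        have hK₀K₂ : K₀ ≤ K₂ := le_trans hK₀K₁ hK₁K₂
        have hhadj : K₂.Adj (φ x₂) (φ w) := by
          rw [hK₂def]
          refine Or.inr ?_
          rw [map_adj]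
          exact ⟨x₂, w, ⟨by simp [hx₂X], by simp, hHadj₂⟩, rfl, rfl⟩
        have hfadj₂ : K₂.Adj (φ xs) (φ vs) := hK₁K₂ hfadj
        -- common part of cases I and II : given the side position of x₂ and w,
        -- a and φ x₂ become 2-edge-connected in K₂
        by_cases hPx₂ : (K₀.deleteEdges {s(c',d')}).Reachable c' (φ x₂)
        case pos =>
          -- case II
          have hPw : ¬ (K₀.deleteEdges {s(c',d')}).Reachable c' (φ w) := hiff₂.mp hPx₂
          by_cases hreach2 : (bicompGraph K₀).Reachable a (φ x₂)
          case pos =>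
            -- II-b : contradiction with maximality of the chosen pair
            exfalso
            have hx₂A : (K₀.deleteEdges {s(a,b)}).Reachable a (φ x₂) :=
              hreach2.mono (bicomp_le_del hbab)
            have hwA : ¬ (K₀.deleteEdges {s(a,b)}).Reachable a (φ w) :=
              fun h => hPw (hN2 c' d' hGG' _ h)
            have hmem : ({y | (K₀.deleteEdges {s(c',d')}).Reachable c' y}).ncard ∈ Adm :=
              ⟨x₂, w, c', d', ⟨hx₂X, hwXY, hHadj₂, hnadj₂₀, hx₂A, hwA⟩, hGG', hPw, rfl⟩
            have hle1 := le_csSup hAdmbdd hmem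
            rcases hN1 cs ds c' d' hGGs hGG' with hsub | hsub
            · have hss : {y | (K₀.deleteEdges {s(cs,ds)}).Reachable cs y} ⊂
                  {y | (K₀.deleteEdges {s(c',d')}).Reachable c' y} := by
                refine ⟨hsub, fun hts => houts (hts hvin')⟩
              have hlt := Set.ncard_lt_ncard hss (Set.toFinite _)
              omega
            · exact houts (hsub hvin')
          case neg =>
            -- II-a
            have hBR2 : (bicompGraph K₂).Reachable a (φ x₂) := by
              by_contra hcc
              obtain ⟨c₀, d₀, hbK₀', hbK₂', hR0a, hR0nx, hunc⟩ := workhorse hK₀K₂ hpre₀ hcc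
              have hadj₀cd : K₀.Adj c₀ d₀ := ((isBridge_iff' hpre₀).mp hbK₀').1
              have hkill : ¬ K₂.IsBridge s(c',d') :=
                bridge_killed hK₀K₂ hpre₀ hGG'.1 hhadj hPx₂ hPw
                  (ne_of_not_adj hnadj₂₀ hadjγ)
              have hneγ : s(c₀,d₀) ≠ s(c',d') := fun hEq => hkill (hEq ▸ hbK₂')
              have hfunc := hunc _ _ hfadj₂ hnadj_f
              have hhunc := hunc _ _ hhadj hnadj₂₀
              by_cases hpos : (K₀.deleteEdges {s(c',d')}).Reachable c' c₀
              · have hd₀in : (K₀.deleteEdges {s(c',d')}).Reachable c' d₀ :=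
                  (reach_congr_adj hadj₀cd hneγ).mp hpos
                have h1 : (K₀.deleteEdges {s(c₀,d₀)}).Reachable (φ z) (φ w) :=
                  reach_del_of_side (not_reach_other hGG'.1 hd₀in)
                    ((side_compl hpre₀ hGG'.1 _).mp hGG'.2.2)
                    ((side_compl hpre₀ hGG'.1 _).mp hPw)
                have hR0nw : ¬ (K₀.deleteEdges {s(c₀,d₀)}).Reachable c₀ (φ w) :=
                  fun h => hR0nx (hhunc.mpr h)
                have hR0nz : ¬ (K₀.deleteEdges {s(c₀,d₀)}).Reachable c₀ (φ z) :=
                  fun h => hR0nw (h.trans h1)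
                have hGG0 : K₀.IsBridge s(c₀,d₀) ∧
                    (K₀.deleteEdges {s(c₀,d₀)}).Reachable c₀ a ∧
                    ¬ (K₀.deleteEdges {s(c₀,d₀)}).Reachable c₀ (φ z) := ⟨hbK₀', hR0a, hR0nz⟩
                have hR0vs : (K₀.deleteEdges {s(c₀,d₀)}).Reachable c₀ (φ vs) :=
                  hfunc.mp (hN2 c₀ d₀ hGG0 _ hxsA)
                have hminle := hminβ c₀ d₀ hGG0 hR0vs
                rcases hN1 c' d' c₀ d₀ hGG' hGG0 with hsub | hsub
                · exact ((isBridge_iff' hpre₀).mp hbK₀').2 (hsub hd₀in)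
                · have heq := Set.eq_of_subset_of_ncard_le hsub hminle (Set.toFinite _)
                  have hmem2 : d₀ ∈ {y | (K₀.deleteEdges {s(c',d')}).Reachable c' y} := hd₀in
                  rw [← heq] at hmem2
                  exact ((isBridge_iff' hpre₀).mp hbK₀').2 hmem2
              · have hd₀out : ¬ (K₀.deleteEdges {s(c',d')}).Reachable c' d₀ :=
                  fun h => hpos ((reach_congr_adj hadj₀cd hneγ).mpr h)
                have h1 : (K₀.deleteEdges {s(c₀,d₀)}).Reachable a (φ x₂) :=
                  reach_del_of_side hd₀out hGG'.2.1 hPx₂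
                exact hR0nx (hR0a.trans h1)
            have hold : ¬ (bicompGraph K₀).Reachable (φ mA) (φ x₂) :=
              fun h => hreach2 ((hM1 mA hmAX hmA).trans h)
            have hnew : (bicompGraph K₂).Reachable (φ mA) (φ x₂) :=
              ((hM1 mA hmAX hmA).mono (bicomp_mono hK₀K₂)).symm.trans hBR2
            refine ⟨insert w (insert vs Y), ?_, ?_, ?_, ?_⟩
            · rw [Finset.disjoint_insert_left, Finset.disjoint_insert_left]
              refine ⟨fun h => hwXY (Finset.mem_union_left _ h),
                fun h => hSPs.2.1 (Finset.mem_union_left _ h), hd⟩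
            · have h1 := Finset.card_insert_le w (insert vs Y)
              have h2 := Finset.card_insert_le vs Y
              omega
            · intro y hy
              rcases Finset.mem_insert.mp hy with rfl | hy
              · exact ⟨x₂, hx₂X, ((new_nonbridge hK₁K₂ hpre₁ hhadj hnadj₂).reachable)⟩
              rcases Finset.mem_insert.mp hy with rfl | hy
              · exact ⟨xs, hSPs.1,
                  (((new_nonbridge hK₀K₁ hpre₀ hfadj hnadj_f).reachable).mono
                    (bicomp_mono hK₁K₂))⟩
              · obtain ⟨x', hx'X, hx'⟩ := hinv y hy
                exact ⟨x', hx'X, hx'.mono (bicomp_mono hK₀K₂)⟩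
            · exact phi_dec hK₀K₂ (fun x : β => φ x) (↑X : Set β) (X.finite_toSet)
                (Finset.mem_coe.mpr hmAX) (Finset.mem_coe.mpr hx₂X) hold hnew
        case neg =>
          -- case I
          have hPw : (K₀.deleteEdges {s(c',d')}).Reachable c' (φ w) := by
            by_contra hc2
            exact hPx₂ (hiff₂.mpr hc2)
          have hBR2 : (bicompGraph K₂).Reachable a (φ x₂) := by
            by_contra hcc
            obtain ⟨c₀, d₀, hbK₀', hbK₂', hR0a, hR0nx, hunc⟩ := workhorse hK₀K₂ hpre₀ hcc
            have hadj₀cd : K₀.Adj c₀ d₀ := ((isBridge_iff' hpre₀).mp hbK₀').1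
            have hkill : ¬ K₂.IsBridge s(c',d') :=
              bridge_killed hK₀K₂ hpre₀ hGG'.1 hhadj.symm hPw hPx₂
                (ne_of_not_adj (fun h => hnadj₂₀ h.symm) hadjγ)
            have hneγ : s(c₀,d₀) ≠ s(c',d') := fun hEq => hkill (hEq ▸ hbK₂')
            have hfunc := hunc _ _ hfadj₂ hnadj_f
            have hhunc := hunc _ _ hhadj hnadj₂₀
            by_cases hpos : (K₀.deleteEdges {s(c',d')}).Reachable c' c₀
            · have hd₀in : (K₀.deleteEdges {s(c',d')}).Reachable c' d₀ :=
                (reach_congr_adj hadj₀cd hneγ).mp hpos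
              have h1 : (K₀.deleteEdges {s(c₀,d₀)}).Reachable (φ z) (φ x₂) :=
                reach_del_of_side (not_reach_other hGG'.1 hd₀in)
                  ((side_compl hpre₀ hGG'.1 _).mp hGG'.2.2)
                  ((side_compl hpre₀ hGG'.1 _).mp hPx₂)
              have hR0nz : ¬ (K₀.deleteEdges {s(c₀,d₀)}).Reachable c₀ (φ z) :=
                fun h => hR0nx (h.trans h1)
              have hGG0 : K₀.IsBridge s(c₀,d₀) ∧
                  (K₀.deleteEdges {s(c₀,d₀)}).Reachable c₀ a ∧
                  ¬ (K₀.deleteEdges {s(c₀,d₀)}).Reachable c₀ (φ z) := ⟨hbK₀', hR0a, hR0nz⟩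
              have hR0vs : (K₀.deleteEdges {s(c₀,d₀)}).Reachable c₀ (φ vs) :=
                hfunc.mp (hN2 c₀ d₀ hGG0 _ hxsA)
              have hminle := hminβ c₀ d₀ hGG0 hR0vs
              rcases hN1 c' d' c₀ d₀ hGG' hGG0 with hsub | hsub
              · exact ((isBridge_iff' hpre₀).mp hbK₀').2 (hsub hd₀in)
              · have heq := Set.eq_of_subset_of_ncard_le hsub hminle (Set.toFinite _)
                have hmem2 : d₀ ∈ {y | (K₀.deleteEdges {s(c',d')}).Reachable c' y} := hd₀in
                rw [← heq] at hmem2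
                exact ((isBridge_iff' hpre₀).mp hbK₀').2 hmem2
            · have hd₀out : ¬ (K₀.deleteEdges {s(c',d')}).Reachable c' d₀ :=
                fun h => hpos ((reach_congr_adj hadj₀cd hneγ).mpr h)
              have h1 : (K₀.deleteEdges {s(c₀,d₀)}).Reachable a (φ w) :=
                reach_del_of_side hd₀out hGG'.2.1 hPw
              exact hR0nx (hhunc.mpr (hR0a.trans h1))
          have hmAγ : (K₀.deleteEdges {s(c',d')}).Reachable c' (φ mA) :=
            hN2 c' d' hGG' _ hmA
          have hold : ¬ (bicompGraph K₀).Reachable (φ mA) (φ x₂) := by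
            intro h
            exact hPx₂ (hmAγ.trans (h.mono (bicomp_le_del hGG'.1)))
          have hnew : (bicompGraph K₂).Reachable (φ mA) (φ x₂) :=
            ((hM1 mA hmAX hmA).mono (bicomp_mono hK₀K₂)).symm.trans hBR2
          refine ⟨insert w (insert vs Y), ?_, ?_, ?_, ?_⟩
          · rw [Finset.disjoint_insert_left, Finset.disjoint_insert_left]
            refine ⟨fun h => hwXY (Finset.mem_union_left _ h),
              fun h => hSPs.2.1 (Finset.mem_union_left _ h), hd⟩
          · have h1 := Finset.card_insert_le w (insert vs Y)
            have h2 := Finset.card_insert_le vs Y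
            omega
          · intro y hy
            rcases Finset.mem_insert.mp hy with rfl | hy
            · exact ⟨x₂, hx₂X, ((new_nonbridge hK₁K₂ hpre₁ hhadj hnadj₂).reachable)⟩
            rcases Finset.mem_insert.mp hy with rfl | hy
            · exact ⟨xs, hSPs.1,
                (((new_nonbridge hK₀K₁ hpre₀ hfadj hnadj_f).reachable).mono
                  (bicomp_mono hK₁K₂))⟩
            · obtain ⟨x', hx'X, hx'⟩ := hinv y hy
              exact ⟨x', hx'X, hx'.mono (bicomp_mono hK₀K₂)⟩
          · exact phi_dec hK₀K₂ (fun x : β => φ x) (↑X : Set β) (X.finite_toSet)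
              (Finset.mem_coe.mpr hmAX) (Finset.mem_coe.mpr hx₂X) hold hnew
      case neg =>
        -- β-i : the member bridge got killed by adding vs; read off the killing edge
        have hadjγK₁ : K₁.Adj c' d' := hK₀K₁ hadjγ
        have hreachγ : (K₁.deleteEdges {s(c',d')}).Reachable c' d' := by
          by_contra hr
          exact hbr1 ((isBridge_iff' hpre₁).mpr ⟨hadjγK₁, hr⟩)
        obtain ⟨W⟩ := hreachγ
        obtain ⟨r, s', hrs, hPr, hPs⟩ := cross_walk W
          (fun x => (K₀.deleteEdges {s(c',d')}).Reachable c' x)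
          (Reachable.refl c') (((isBridge_iff' hpre₀).mp hGG'.1).2)
        rw [deleteEdges_adj] at hrs
        have hneγ' : s(r,s') ≠ s(c',d') := by simpa using hrs.2
        have hnK₀rs : ¬ K₀.Adj r s' := by
          intro hc2
          exact hPs (hPr.trans (Adj.reachable (by
            rw [deleteEdges_adj]; exact ⟨hc2, by simpa using hneγ'⟩)))
        have hnew' := sp_adj_new (Z := (↑(X ∪ insert vs Y) : Set β)) (by
            rw [← hK₁def]; exact hrs.1) (Z' := (↑(X ∪ Y) : Set β)) hsub01 (by
            rw [← hK₀def]; exact hnK₀rs)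
        obtain ⟨u, v, huZ, hvZ, huvH, hur, hvs', hnboth⟩ := hnew'
        -- the endpoint outside the side must be an old vertex, the inside one is vs
        have hvXYor : (v ∈ X ∪ Y) ∨ v = vs := by
          simp only [Finset.coe_union, Finset.coe_insert, Set.mem_union,
            Set.mem_insert_iff] at hvZ
          rcases hvZ with h | h
          · exact Or.inl (Finset.mem_union_left _ h)
          rcases h with h | h
          · exact Or.inr h
          · exact Or.inl (Finset.mem_union_right _ h)
        have huXYor : (u ∈ X ∪ Y) ∨ u = vs := by
          simp only [Finset.coe_union, Finset.coe_insert, Set.mem_union,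
            Set.mem_insert_iff] at huZ
          rcases huZ with h | h
          · exact Or.inl (Finset.mem_union_left _ h)
          rcases h with h | h
          · exact Or.inr h
          · exact Or.inl (Finset.mem_union_right _ h)
        have hvXY : v ∈ X ∪ Y := by
          rcases hvXYor with h | h
          · exact h
          · exfalso
            apply hPs
            rw [← hvs', h]
            exact hvin'
        have huvs : u = vs := by
          rcases huXYor with h | h
          · exfalso
            apply hnboth
            constructor
            · simp only [Finset.coe_union, Set.mem_union]
              rcases Finset.mem_union.mp h with h' | h'
              · exact Or.inl h'
              · exact Or.inr h'
            · simp only [Finset.coe_union, Set.mem_union]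
              rcases Finset.mem_union.mp hvXY with h' | h'
              · exact Or.inl h'
              · exact Or.inr h'
          · exact h
        -- get the mark attached to v
        have hvside : ¬ (K₀.deleteEdges {s(c',d')}).Reachable c' (φ v) := by
          rw [hvs']; exact hPs
        obtain ⟨m', hm'X, hm'v, hm'side⟩ :
            ∃ m', m' ∈ X ∧ (bicompGraph K₁).Reachable (φ m') (φ v) ∧
              ¬ (K₀.deleteEdges {s(c',d')}).Reachable c' (φ m') := by
          rcases Finset.mem_union.mp hvXY with hvX | hvY
          · exact ⟨v, hvX, Reachable.refl _, hvside⟩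
          · obtain ⟨x'', hx''X, hx''⟩ := hinv v hvY
            refine ⟨x'', hx''X, hx''.mono (bicomp_mono hK₀K₁), fun hc2 => ?_⟩
            exact hvside (hc2.trans (hx''.mono (bicomp_le_del hGG'.1)))
        -- the new edge joins φ vs and φ v in the bridgeless part of K₁
        have hedge : (bicompGraph K₁).Reachable (φ vs) (φ v) := by
          have hadjK₁ : K₁.Adj (φ vs) (φ v) := by
            rw [← huvs, hur, hvs']
            exact hrs.1
          have hnadjK₀ : ¬ K₀.Adj (φ vs) (φ v) := by
            rw [← huvs, hur, hvs']
            exact hnK₀rs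
          exact (new_nonbridge hK₀K₁ hpre₀ hadjK₁ hnadjK₀).reachable
        have hchain : (bicompGraph K₁).Reachable (φ mA) (φ m') := by
          have h1 : (bicompGraph K₁).Reachable a (φ mA) :=
            (hM1 mA hmAX hmA).mono (bicomp_mono hK₀K₁)
          have h2 : (bicompGraph K₁).Reachable a (φ xs) :=
            (hM1 xs hSPs.1 hxsA).mono (bicomp_mono hK₀K₁)
          have h3 : (bicompGraph K₁).Reachable (φ xs) (φ vs) :=
            (new_nonbridge hK₀K₁ hpre₀ hfadj hnadj_f).reachable
          exact ((((h1.symm.trans h2).trans h3).trans hedge).trans hm'v.symm)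
        have hmAγ : (K₀.deleteEdges {s(c',d')}).Reachable c' (φ mA) :=
          hN2 c' d' hGG' _ hmA
        have hold : ¬ (bicompGraph K₀).Reachable (φ mA) (φ m') := by
          intro h
          exact hm'side (hmAγ.trans (h.mono (bicomp_le_del hGG'.1)))
        refine ⟨insert vs Y, ?_, ?_, ?_, ?_⟩
        · rw [Finset.disjoint_insert_left]
          exact ⟨fun h => hSPs.2.1 (Finset.mem_union_left _ h), hd⟩
        · have := Finset.card_insert_le vs Y
          omega
        · intro y hy
          rcases Finset.mem_insert.mp hy with rfl | hy
          · exact ⟨xs, hSPs.1, ((new_nonbridge hK₀K₁ hpre₀ hfadj hnadj_f).reachable)⟩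
          · obtain ⟨x', hx'X, hx'⟩ := hinv y hy
            exact ⟨x', hx'X, hx'.mono (bicomp_mono hK₀K₁)⟩
        · exact phi_dec hK₀K₁ (fun x : β => φ x) (↑X : Set β) (X.finite_toSet)
            (Finset.mem_coe.mpr hmAX) (Finset.mem_coe.mpr hm'X) hold hchain

lemma close_step {α β : Type*} [Fintype α] [Fintype β] [DecidableEq β]
    (G : SimpleGraph α) (H : SimpleGraph β) (φ : β ↪ α)
    (X Y : Finset β)
    (hinv : ∀ y ∈ Y, ∃ x ∈ X,
      (bicompGraph (superpose G (restrict H ↑(X ∪ Y)) φ)).Reachable (φ x) (φ y))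
    (hone : ∀ x ∈ X, ∀ x' ∈ X,
      (bicompGraph (superpose G (restrict H ↑(X ∪ Y)) φ)).Reachable (φ x) (φ x')) :
    ∀ x ∈ X ∪ Y, ∀ y ∈ X ∪ Y,
      (bicompGraph (superpose G (restrict H ↑(X ∪ Y)) φ)).Reachable (φ x) (φ y) := by
  have hToX : ∀ u ∈ X ∪ Y, ∃ xu ∈ X,
      (bicompGraph (superpose G (restrict H ↑(X ∪ Y)) φ)).Reachable (φ xu) (φ u) := by
    intro u hu
    rcases Finset.mem_union.mp hu with h | h
    · exact ⟨u, h, Reachable.refl _⟩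
    · exact hinv u h
  intro x hx y hy
  obtain ⟨xu, hxu, h1⟩ := hToX x hx
  obtain ⟨xv, hxv, h2⟩ := hToX y hy
  exact (h1.symm.trans (hone xu hxu xv hxv)).trans h2

lemma main_ind {α β : Type*} [Fintype α] [Fintype β] [DecidableEq β]
    (G : SimpleGraph α) (hG : G.Connected) (H : SimpleGraph β) (φ : β ↪ α)
    (hF : TwoEdgeConnected (superpose G H φ))
    (X : Finset β) (hX : ∀ x y : β, H.Adj x y → x ∈ X ∨ y ∈ X) :
    ∀ n : ℕ, ∀ Y : Finset β, Disjoint Y X →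
      (∀ y ∈ Y, ∃ x ∈ X,
        (bicompGraph (superpose G (restrict H ↑(X ∪ Y)) φ)).Reachable (φ x) (φ y)) →
      ((fun x => (bicompGraph (superpose G (restrict H ↑(X ∪ Y)) φ)).connectedComponentMk (φ x))
          '' (↑X : Set β)).ncard ≤ n + 1 →
      ∃ Y' : Finset β, Disjoint Y' X ∧ Y'.card ≤ Y.card + 2 * n ∧
        ∀ x ∈ X ∪ Y', ∀ y ∈ X ∪ Y',
          (bicompGraph (superpose G (restrict H ↑(X ∪ Y')) φ)).Reachable (φ x) (φ y) := by
  intro n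
  induction n with
  | zero =>
    intro Y hdisj hinv hcard
    refine ⟨Y, hdisj, by omega, ?_⟩
    refine close_step G H φ X Y hinv ?_
    intro x hx x' hx'
    have hfin : ((fun x => (bicompGraph (superpose G (restrict H ↑(X ∪ Y)) φ)).connectedComponentMk
        (φ x)) '' (↑X : Set β)).Finite := Set.Finite.image _ X.finite_toSet
    have hEq := (Set.ncard_le_one hfin).mp (by omega)
    have hmem1 : (bicompGraph (superpose G (restrict H ↑(X ∪ Y)) φ)).connectedComponentMk (φ x) ∈
        ((fun x => (bicompGraph (superpose G (restrict H ↑(X ∪ Y)) φ)).connectedComponentMk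
          (φ x)) '' (↑X : Set β)) := ⟨x, Finset.mem_coe.mpr hx, rfl⟩
    have hmem2 : (bicompGraph (superpose G (restrict H ↑(X ∪ Y)) φ)).connectedComponentMk (φ x') ∈
        ((fun x => (bicompGraph (superpose G (restrict H ↑(X ∪ Y)) φ)).connectedComponentMk
          (φ x)) '' (↑X : Set β)) := ⟨x', Finset.mem_coe.mpr hx', rfl⟩
    exact ConnectedComponent.eq.mp (hEq _ hmem1 _ hmem2)
  | succ n ih =>
    intro Y hdisj hinv hcard
    by_cases hsep : ∃ x ∈ X, ∃ x' ∈ X,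
        ¬ (bicompGraph (superpose G (restrict H ↑(X ∪ Y)) φ)).Reachable (φ x) (φ x')
    · obtain ⟨xx, hxx, xx', hxx', hnsep⟩ := hsep
      obtain ⟨Y₂, hdisj₂, hcard₂, hinv₂, hdec⟩ :=
        step G hG H φ hF X hX Y hdisj hinv hxx hxx' hnsep
      obtain ⟨Y', h1, h2, h3⟩ := ih Y₂ hdisj₂ hinv₂ (by omega)
      exact ⟨Y', h1, by omega, h3⟩
    · push_neg at hsep
      refine ⟨Y, hdisj, by omega, close_step G H φ X Y hinv hsep⟩


end StmtAux

/-- Let `G` be connected and `φ : V(H) ↪ V(G)` injective with `F = G ⊕_φ H` edge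
2-connected, and let `X` be a vertex cover of `H` of size `t ≥ 1`. Then there is
`Y ⊆ V(H) \ X` with `|Y| ≤ 2(t-1)` such that, for `H' = H[X ∪ Y]` and
`ψ = φ|_{X ∪ Y}`, all vertices of `ψ(X ∪ Y)` lie in the same biconnected component
of `F' = G ⊕_ψ H'`. -/
theorem stmt4 {α β : Type*} [Fintype α] [Fintype β] [DecidableEq β]
    (G : SimpleGraph α) (hG : G.Connected) (H : SimpleGraph β) (φ : β ↪ α)
    (hF : TwoEdgeConnected (superpose G H φ))
    (X : Finset β) (hX : ∀ x y : β, H.Adj x y → x ∈ X ∨ y ∈ X)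
    (t : ℕ) (ht : X.card = t) (ht1 : 1 ≤ t) :
    ∃ Y : Finset β, Disjoint Y X ∧ Y.card ≤ 2 * (t - 1) ∧
      ∀ x ∈ X ∪ Y, ∀ y ∈ X ∪ Y,
        (bicompGraph (superpose G (restrict H ↑(X ∪ Y)) φ)).connectedComponentMk (φ x) =
          (bicompGraph (superpose G (restrict H ↑(X ∪ Y)) φ)).connectedComponentMk (φ y) := by
  classical
  have hcard0 : ((fun x => (bicompGraph (superpose G (restrict H ↑(X ∪ (∅ : Finset β))) φ)).connectedComponentMk
      (φ x)) '' (↑X : Set β)).ncard ≤ (t - 1) + 1 := by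
    have h1 := Set.ncard_image_le
      (f := fun x => (bicompGraph (superpose G (restrict H ↑(X ∪ (∅ : Finset β))) φ)).connectedComponentMk (φ x))
      (s := (↑X : Set β)) X.finite_toSet
    have h2 : (↑X : Set β).ncard = t := by
      rw [Set.ncard_coe_finset]; exact ht
    omega
  obtain ⟨Y, h1, h2, h3⟩ := StmtAux.main_ind G hG H φ hF X hX (t - 1) ∅
    (Finset.disjoint_empty_left X) (by simp) hcard0
  refine ⟨Y, h1, ?_, ?_⟩
  · simpa using h2
  · intro x hx y hy
    exact ConnectedComponent.eq.mpr (h3 x hx y hy)
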